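/- Let G be a countable group acting by measurable maps on a measurable space (Z, 𝔐), let ν be a G-invariant measure on Z, and suppose the action admits a fundamental domain. Then there is a unique measure ν_G on the quotient space (Z/G, 𝔐/G) such that: for every measurable A ⊆ Z and every G-invariant measurable h : Z → [0,∞], the induced functions h̄, f̄_A : Z/G → [0,∞] (defined by h̄∘pr = h and f̄_A∘pr = f_A, where f_A(z) = #{g ∈ G : gz ∈ A}) satisfy ∫_A h dν = ∫_{Z/G} h̄·f̄_A dν_G. Moreover, for any ν-preserving measurable map φ : Z → Z with φ∘g = g∘φ for all g ∈ G, the factor map φ_G : Z/G → Z/G defined by φ_G∘pr = pr∘φ preserves ν_G. -/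

import Mathlib

open MeasureTheory
open scoped ENNReal

set_option linter.unusedSectionVars false

/-- The defining property of the quotient measure `ν_G` on `Z/G` (with the quotient
σ-algebra `𝔐/G`): for every measurable `A ⊆ Z` and every `G`-invariant measurable
`h : Z → [0,∞]`, with `h̄, f̄_A` the functions induced on `Z/G` by `h` and by
`f_A(z) = #{g : g • z ∈ A}`, one has `∫_A h dν = ∫_{Z/G} h̄ · f̄_A dν_G`. -/
def IsQuotientMeasure {G Z : Type*} [Group G] [MulAction G Z] [mZ : MeasurableSpace Z]
    (ν : Measure Z)
    (νG : @Measure (Quotient (MulAction.orbitRel G Z))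
      (MeasurableSpace.map (Quotient.mk (MulAction.orbitRel G Z)) mZ)) : Prop :=
  ∀ A : Set Z, MeasurableSet A →
    ∀ h : Z → ℝ≥0∞, Measurable h → (∀ (g : G) (z : Z), h (g • z) = h z) →
    ∀ hbar fbar : Quotient (MulAction.orbitRel G Z) → ℝ≥0∞,
      (∀ z : Z, hbar (Quotient.mk (MulAction.orbitRel G Z) z) = h z) →
      (∀ z : Z, fbar (Quotient.mk (MulAction.orbitRel G Z) z)
        = ∑' g : G, A.indicator (fun _ => (1 : ℝ≥0∞)) (g • z)) →
      ∫⁻ z in A, h z ∂ν = ∫⁻ q, hbar q * fbar q ∂νG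

namespace Stmt15Aux

variable {G Z : Type*} [Group G] [Countable G] [MulAction G Z] [mZ : MeasurableSpace Z]

noncomputable def fcnt (G : Type*) {Z : Type*} [Group G] [MulAction G Z] (A : Set Z) (z : Z) :
    ℝ≥0∞ :=
  ∑' g : G, A.indicator (fun _ => (1 : ℝ≥0∞)) (g • z)

theorem fcnt_smul (A : Set Z) (g : G) (z : Z) : fcnt G A (g • z) = fcnt G A z := by
  rw [fcnt, fcnt,
    ← (Equiv.mulRight g).tsum_eq (fun k => A.indicator (fun _ => (1 : ℝ≥0∞)) (k • z))]
  exact tsum_congr fun k => by simp [smul_smul]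

theorem measurable_fcnt (hmeas : ∀ g : G, Measurable fun z : Z => g • z)
    {A : Set Z} (hA : MeasurableSet A) : Measurable (fcnt G A) :=
  Measurable.ennreal_tsum fun g => (measurable_const.indicator hA).comp (hmeas g)

def GFset (G : Type*) {Z : Type*} [Group G] [MulAction G Z] (F : Set Z) : Set Z :=
  {z | ∃ g : G, g • z ∈ F}

theorem measurable_GFset (hmeas : ∀ g : G, Measurable fun z : Z => g • z)
    {F : Set Z} (hF : MeasurableSet F) : MeasurableSet (GFset G F) := by
  have : GFset G F = ⋃ g : G, (fun z : Z => g • z) ⁻¹' F := by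
    ext z; simp [GFset]
  rw [this]
  exact MeasurableSet.iUnion fun g => hmeas g hF

theorem GFset_smul {F : Set Z} {z : Z} (hz : z ∈ GFset G F) (g : G) : g • z ∈ GFset G F := by
  obtain ⟨g', hg'⟩ := hz
  exact ⟨g' * g⁻¹, by simpa [smul_smul, inv_mul_cancel_right] using hg'⟩

theorem GFset_compl_smul {F : Set Z} (g : G) {z : Z} (hz : z ∈ (GFset G F)ᶜ) :
    g • z ∈ (GFset G F)ᶜ := by
  intro hc
  exact hz (by simpa using GFset_smul hc g⁻¹)

theorem GFset_eq_iUnion (F : Set Z) : (⋃ g : G, (fun z : Z => g • z) '' F) = GFset G F := by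
  ext z
  simp only [Set.mem_iUnion, Set.mem_image, GFset, Set.mem_setOf_eq]
  constructor
  · rintro ⟨g, x, hx, rfl⟩
    exact ⟨g⁻¹, by simpa using hx⟩
  · rintro ⟨g, hg⟩
    exact ⟨g⁻¹, g • z, hg, by simp⟩

theorem fcnt_ne_zero {F : Set Z} {z : Z} (hz : z ∈ GFset G F) : fcnt G F z ≠ 0 := by
  intro h0
  rw [fcnt, ENNReal.tsum_eq_zero] at h0
  obtain ⟨g, hg⟩ := hz
  have := h0 g
  rw [Set.indicator_of_mem hg] at this
  exact one_ne_zero this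

theorem fcnt_ne_top {F : Set Z} (hFfin : ∀ z ∈ F, {g : G | g • z ∈ F}.Finite)
    {z : Z} (hz : z ∈ GFset G F) : fcnt G F z ≠ ⊤ := by
  obtain ⟨g, hg⟩ := hz
  rw [← fcnt_smul F g z]
  have hfin := hFfin (g • z) hg
  have h1 : fcnt G F (g • z)
      = ∑' k : G, ({k : G | k • (g • z) ∈ F}).indicator (fun _ => (1 : ℝ≥0∞)) k := by
    rw [fcnt]
    refine tsum_congr fun k => ?_
    by_cases h : k • (g • z) ∈ F <;> simp [h]
  rw [h1, ← tsum_subtype]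
  haveI := hfin.fintype
  rw [tsum_fintype]
  exact (ENNReal.sum_lt_top.2 fun a _ => ENNReal.one_lt_top).ne

theorem mp_smul (hmeas : ∀ g : G, Measurable fun z : Z => g • z) (ν : Measure Z)
    (hinv : ∀ (g : G) (A : Set Z), MeasurableSet A → ν ((fun z : Z => g • z) ⁻¹' A) = ν A)
    (g : G) : MeasurePreserving (fun z : Z => g • z) ν ν :=
  ⟨hmeas g, Measure.ext fun A hA => by rw [Measure.map_apply (hmeas g) hA]; exact hinv g A hA⟩

theorem pr_smul (g : G) (z : Z) :
    Quotient.mk (MulAction.orbitRel G Z) (g • z) = Quotient.mk (MulAction.orbitRel G Z) z :=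
  Quotient.sound (MulAction.mem_orbit z g)

theorem measurable_pr :
    @Measurable Z (Quotient (MulAction.orbitRel G Z)) mZ
      (MeasurableSpace.map (Quotient.mk (MulAction.orbitRel G Z)) mZ)
      (Quotient.mk (MulAction.orbitRel G Z)) := fun _ hs => hs

theorem measurable_lift_of (h : Z → ℝ≥0∞) (hh : Measurable h)
    (hbar : Quotient (MulAction.orbitRel G Z) → ℝ≥0∞)
    (he : ∀ z, hbar (Quotient.mk (MulAction.orbitRel G Z) z) = h z) :
    @Measurable _ _ (MeasurableSpace.map (Quotient.mk (MulAction.orbitRel G Z)) mZ) _ hbar := by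
  intro s hs
  show MeasurableSet (Quotient.mk (MulAction.orbitRel G Z) ⁻¹' (hbar ⁻¹' s))
  have : Quotient.mk (MulAction.orbitRel G Z) ⁻¹' (hbar ⁻¹' s) = h ⁻¹' s := by
    ext z; simp [Set.mem_preimage, he]
  rw [this]; exact hh hs

theorem fcnt_lift_sound (A : Set Z) :
    ∀ a b : Z, (MulAction.orbitRel G Z) a b → fcnt G A a = fcnt G A b := by
  intro a b hab
  rw [MulAction.orbitRel_apply] at hab
  obtain ⟨g, rfl⟩ := hab
  exact fcnt_smul A g b

theorem lift_sound_of_invariant (h : Z → ℝ≥0∞) (hi : ∀ (g : G) (z : Z), h (g • z) = h z) :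
    ∀ a b : Z, (MulAction.orbitRel G Z) a b → h a = h b := by
  intro a b hab
  rw [MulAction.orbitRel_apply] at hab
  obtain ⟨g, rfl⟩ := hab
  exact hi g b

theorem preimage_image_pr (N : Set Z) (hN : ∀ (g : G) (z : Z), z ∈ N → g • z ∈ N) :
    Quotient.mk (MulAction.orbitRel G Z) ⁻¹'
      (Quotient.mk (MulAction.orbitRel G Z) '' N) = N := by
  ext z
  constructor
  · rintro ⟨w, hwN, hw⟩
    have hrel : w ∈ MulAction.orbit G z := Quotient.exact hw
    obtain ⟨g, hg⟩ := hrel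
    have : g⁻¹ • w = z := by rw [← hg]; simp
    rw [← this]
    exact hN g⁻¹ w hwN
  · exact fun hz => ⟨z, hz, rfl⟩

theorem unfold_lintegral (hmeas : ∀ g : G, Measurable fun z : Z => g • z) (ν : Measure Z)
    (hinv : ∀ (g : G) (A : Set Z), MeasurableSet A → ν ((fun z : Z => g • z) ⁻¹' A) = ν A)
    (F : Set Z) (hFm : MeasurableSet F)
    (hFfull : ν ((⋃ g : G, (fun z : Z => g • z) '' F)ᶜ) = 0)
    (hFfin : ∀ z ∈ F, {g : G | g • z ∈ F}.Finite)
    (A : Set Z) (hA : MeasurableSet A)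
    (k : Z → ℝ≥0∞) (hk : Measurable k) (hki : ∀ (g : G) (z : Z), k (g • z) = k z) :
    ∫⁻ z, k z * fcnt G A z ∂((ν.restrict F).withDensity fun z => (fcnt G F z)⁻¹)
      = ∫⁻ z in A, k z ∂ν := by
  have hmF : Measurable (fcnt G F) := measurable_fcnt hmeas hFm
  have hmA : Measurable (fcnt G A) := measurable_fcnt hmeas hA
  have hGF0 : ν (GFset G F)ᶜ = 0 := by rw [← GFset_eq_iUnion]; exact hFfull
  set c : Z → ℝ≥0∞ := fun z =>
    F.indicator (fun _ => (1 : ℝ≥0∞)) z * (fcnt G F z)⁻¹ * k z with hc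
  have hmc : Measurable c := ((measurable_const.indicator hFm).mul hmF.inv).mul hk
  set d : Z → ℝ≥0∞ := fun w => (fcnt G F w)⁻¹ * k w * A.indicator (fun _ => (1 : ℝ≥0∞)) w
    with hd
  have hmd : Measurable d := (hmF.inv.mul hk).mul (measurable_const.indicator hA)
  rw [lintegral_withDensity_eq_lintegral_mul _ (f := fun z => (fcnt G F z)⁻¹) hmF.inv
      (g := fun z => k z * fcnt G A z) (hk.mul hmA),
    ← lintegral_indicator hFm]
  calc
    ∫⁻ z, F.indicator (fun z => ((fun z => (fcnt G F z)⁻¹) * fun z => k z * fcnt G A z) z) z ∂ν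
        = ∫⁻ z, ∑' g : G, c z * A.indicator (fun _ => (1 : ℝ≥0∞)) (g • z) ∂ν := by
      refine lintegral_congr fun z => ?_
      rw [ENNReal.tsum_mul_left]
      show F.indicator (fun z => (fcnt G F z)⁻¹ * (k z * fcnt G A z)) z = c z * fcnt G A z
      by_cases hz : z ∈ F
      · rw [Set.indicator_of_mem hz, hc]
        simp only [Set.indicator_of_mem hz]
        ring
      · rw [Set.indicator_of_notMem hz, hc]
        simp [Set.indicator_of_notMem hz]
    _ = ∑' g : G, ∫⁻ z, c z * A.indicator (fun _ => (1 : ℝ≥0∞)) (g • z) ∂ν :=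
      lintegral_tsum fun g =>
        (hmc.mul ((measurable_const.indicator hA).comp (hmeas g))).aemeasurable
    _ = ∑' g : G, ∫⁻ w, F.indicator (fun _ => (1 : ℝ≥0∞)) (g⁻¹ • w) * d w ∂ν := by
      refine tsum_congr fun g => ?_
      have hmf : Measurable fun w : Z =>
          F.indicator (fun _ => (1 : ℝ≥0∞)) (g⁻¹ • w) * d w :=
        ((measurable_const.indicator hFm).comp (hmeas g⁻¹)).mul hmd
      have := (mp_smul hmeas ν hinv g).lintegral_comp hmf
      rw [← this]
      refine lintegral_congr fun z => ?_
      show c z * A.indicator (fun _ => (1 : ℝ≥0∞)) (g • z)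
          = F.indicator (fun _ => (1 : ℝ≥0∞)) (g⁻¹ • g • z) * d (g • z)
      rw [inv_smul_smul, hd]
      simp only []
      rw [fcnt_smul F g z, hki g z, hc]
      ring
    _ = ∫⁻ w, ∑' g : G, F.indicator (fun _ => (1 : ℝ≥0∞)) (g⁻¹ • w) * d w ∂ν :=
      (lintegral_tsum fun g =>
        (((measurable_const.indicator hFm).comp (hmeas g⁻¹)).mul hmd).aemeasurable).symm
    _ = ∫⁻ w, fcnt G F w * d w ∂ν := by
      refine lintegral_congr fun w => ?_
      rw [ENNReal.tsum_mul_right]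
      congr 1
      rw [fcnt]
      exact (Equiv.inv G).tsum_eq fun g => F.indicator (fun _ => (1 : ℝ≥0∞)) (g • w)
    _ = ∫⁻ w, A.indicator k w ∂ν := by
      refine lintegral_congr_ae ?_
      have hae : ∀ᵐ w ∂ν, w ∈ GFset G F := by
        rw [MeasureTheory.ae_iff]
        exact hGF0
      filter_upwards [hae] with w hw
      have h0 := fcnt_ne_zero (G := G) hw
      have ht := fcnt_ne_top hFfin hw
      rw [hd]
      simp only []
      rw [← mul_assoc, ← mul_assoc, ENNReal.mul_inv_cancel h0 ht, one_mul]
      by_cases hwA : w ∈ A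
      · rw [Set.indicator_of_mem hwA, Set.indicator_of_mem hwA, mul_one]
      · rw [Set.indicator_of_notMem hwA, Set.indicator_of_notMem hwA, mul_zero]
    _ = ∫⁻ z in A, k z ∂ν := lintegral_indicator hA k

theorem isQuot_map (hmeas : ∀ g : G, Measurable fun z : Z => g • z) (ν : Measure Z)
    (hinv : ∀ (g : G) (A : Set Z), MeasurableSet A → ν ((fun z : Z => g • z) ⁻¹' A) = ν A)
    (F : Set Z) (hFm : MeasurableSet F)
    (hFfull : ν ((⋃ g : G, (fun z : Z => g • z) '' F)ᶜ) = 0)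
    (hFfin : ∀ z ∈ F, {g : G | g • z ∈ F}.Finite) :
    IsQuotientMeasure ν
      (@Measure.map Z (Quotient (MulAction.orbitRel G Z)) mZ
        (MeasurableSpace.map (Quotient.mk (MulAction.orbitRel G Z)) mZ)
        (Quotient.mk (MulAction.orbitRel G Z))
        ((ν.restrict F).withDensity fun z => (fcnt G F z)⁻¹)) := by
  intro A hA h hh hhi hbar fbar hbe hfe
  have hfeq : ∀ z, fbar (Quotient.mk (MulAction.orbitRel G Z) z) = fcnt G A z := fun z => by
    rw [hfe z, fcnt]
  have hmb := measurable_lift_of h hh hbar hbe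
  have hfb := measurable_lift_of (fcnt G A) (measurable_fcnt hmeas hA) fbar hfeq
  rw [lintegral_map (f := fun q => hbar q * fbar q) (hmb.mul hfb) measurable_pr,
    ← unfold_lintegral hmeas ν hinv F hFm hFfull hFfin A hA h hh hhi]
  exact lintegral_congr fun z => by rw [hbe z, hfeq z]

theorem quot_null (ν : Measure Z)
    (νG : @Measure (Quotient (MulAction.orbitRel G Z))
      (MeasurableSpace.map (Quotient.mk (MulAction.orbitRel G Z)) mZ))
    (hQ : IsQuotientMeasure ν νG) (T : Set (Quotient (MulAction.orbitRel G Z)))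
    (hT : MeasurableSet (Quotient.mk (MulAction.orbitRel G Z) ⁻¹' T))
    (hT0 : ν (Quotient.mk (MulAction.orbitRel G Z) ⁻¹' T) = 0) : νG T = 0 := by
  set B := Quotient.mk (MulAction.orbitRel G Z) ⁻¹' T with hBdef
  have key := hQ B hT (fun _ => 1) measurable_const (fun _ _ => rfl) (fun _ => 1)
    (Quotient.lift (fcnt G B) (fcnt_lift_sound B)) (fun _ => rfl) (fun _ => rfl)
  rw [setLIntegral_one, hT0] at key
  simp only [one_mul] at key
  have hTm : MeasurableSet[MeasurableSpace.map (Quotient.mk (MulAction.orbitRel G Z)) mZ] T :=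
    hT
  refine le_antisymm ?_ zero_le
  calc νG T = ∫⁻ q, T.indicator 1 q ∂νG := (lintegral_indicator_one hTm).symm
    _ ≤ ∫⁻ q, Quotient.lift (fcnt G B) (fcnt_lift_sound B) q ∂νG := by
        refine lintegral_mono fun q => ?_
        obtain ⟨z, rfl⟩ := Quotient.exists_rep q
        by_cases hz : Quotient.mk (MulAction.orbitRel G Z) z ∈ T
        · rw [Set.indicator_of_mem hz]
          show (1 : ℝ≥0∞) ≤ fcnt G B z
          have hz' : (1 : G) • z ∈ B := by rw [one_smul]; exact hz
          calc (1 : ℝ≥0∞) = B.indicator (fun _ => (1 : ℝ≥0∞)) ((1 : G) • z) := by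
                rw [Set.indicator_of_mem hz']
            _ ≤ fcnt G B z := ENNReal.le_tsum 1
        · rw [Set.indicator_of_notMem hz]
          exact zero_le
    _ = 0 := key.symm

theorem quot_formula (hmeas : ∀ g : G, Measurable fun z : Z => g • z) (ν : Measure Z)
    (hinv : ∀ (g : G) (A : Set Z), MeasurableSet A → ν ((fun z : Z => g • z) ⁻¹' A) = ν A)
    (F : Set Z) (hFm : MeasurableSet F)
    (hFfull : ν ((⋃ g : G, (fun z : Z => g • z) '' F)ᶜ) = 0)
    (hFfin : ∀ z ∈ F, {g : G | g • z ∈ F}.Finite)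
    (νG : @Measure (Quotient (MulAction.orbitRel G Z))
      (MeasurableSpace.map (Quotient.mk (MulAction.orbitRel G Z)) mZ))
    (hQ : IsQuotientMeasure ν νG) (S : Set (Quotient (MulAction.orbitRel G Z)))
    (hS : MeasurableSet[MeasurableSpace.map (Quotient.mk (MulAction.orbitRel G Z)) mZ] S) :
    νG S = ∫⁻ z in F,
      (Quotient.mk (MulAction.orbitRel G Z) ⁻¹' S).indicator
        (fun z => (fcnt G F z)⁻¹) z ∂ν := by
  have hGF0 : ν (GFset G F)ᶜ = 0 := by rw [← GFset_eq_iUnion]; exact hFfull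
  set B := Quotient.mk (MulAction.orbitRel G Z) ⁻¹' S with hBdef
  have hB : MeasurableSet B := hS
  have hBinv : ∀ (g : G) (z : Z), (g • z ∈ B ↔ z ∈ B) := by
    intro g z
    show Quotient.mk (MulAction.orbitRel G Z) (g • z) ∈ S ↔ _
    rw [pr_smul]
    exact Iff.rfl
  set h : Z → ℝ≥0∞ := fun z => B.indicator (fun z => (fcnt G F z)⁻¹) z with hh'
  have hmh : Measurable h := (measurable_fcnt hmeas hFm).inv.indicator hB
  have hinvh : ∀ (g : G) (z : Z), h (g • z) = h z := by
    intro g z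
    by_cases hz : z ∈ B
    · rw [hh']
      simp only []
      rw [Set.indicator_of_mem ((hBinv g z).2 hz), Set.indicator_of_mem hz, fcnt_smul]
    · rw [hh']
      simp only []
      rw [Set.indicator_of_notMem (fun hc => hz ((hBinv g z).1 hc)),
        Set.indicator_of_notMem hz]
  have key := hQ F hFm h hmh hinvh
    (Quotient.lift h (lift_sound_of_invariant h hinvh))
    (Quotient.lift (fcnt G F) (fcnt_lift_sound F)) (fun _ => rfl) (fun _ => rfl)
  -- bad set
  set Tbad := Quotient.mk (MulAction.orbitRel G Z) '' (GFset G F)ᶜ with hTbdef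
  have hpreT : Quotient.mk (MulAction.orbitRel G Z) ⁻¹' Tbad = (GFset G F)ᶜ :=
    preimage_image_pr _ (fun g z hz => GFset_compl_smul g hz)
  have hTbad0 : νG Tbad = 0 := by
    refine quot_null ν νG hQ Tbad ?_ ?_
    · rw [hpreT]; exact (measurable_GFset hmeas hFm).compl
    · rw [hpreT]; exact hGF0
  have hae : ∀ᵐ q ∂νG, q ∉ Tbad := by
    rw [MeasureTheory.ae_iff]
    simpa using hTbad0
  calc νG S = ∫⁻ q, S.indicator 1 q ∂νG := (lintegral_indicator_one hS).symm
    _ = ∫⁻ q, Quotient.lift h (lift_sound_of_invariant h hinvh) q *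
          Quotient.lift (fcnt G F) (fcnt_lift_sound F) q ∂νG := by
        refine lintegral_congr_ae ?_
        filter_upwards [hae] with q hq
        obtain ⟨z, rfl⟩ := Quotient.exists_rep q
        have hzGF : z ∈ GFset G F := by
          by_contra hc
          exact hq ⟨z, hc, rfl⟩
        show S.indicator 1 (Quotient.mk (MulAction.orbitRel G Z) z) = h z * fcnt G F z
        by_cases hzB : z ∈ B
        · rw [Set.indicator_of_mem (show Quotient.mk (MulAction.orbitRel G Z) z ∈ S from hzB),
            hh']
          simp only []
          rw [Set.indicator_of_mem hzB,
            ENNReal.inv_mul_cancel (fcnt_ne_zero hzGF) (fcnt_ne_top hFfin hzGF)]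
          rfl
        · rw [Set.indicator_of_notMem
            (show Quotient.mk (MulAction.orbitRel G Z) z ∉ S from hzB), hh']
          simp only []
          rw [Set.indicator_of_notMem hzB, zero_mul]
    _ = ∫⁻ z in F, h z ∂ν := key.symm

end Stmt15Aux


open Stmt15Aux in
theorem stmt15 {G Z : Type*} [Group G] [Countable G] [MulAction G Z] [mZ : MeasurableSpace Z]
    (hmeas : ∀ g : G, Measurable fun z : Z => g • z)
    (ν : Measure Z)
    (hinv : ∀ (g : G) (A : Set Z), MeasurableSet A → ν ((fun z : Z => g • z) ⁻¹' A) = ν A)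
    (F : Set Z) (hFm : MeasurableSet F)
    (hFfull : ν ((⋃ g : G, (fun z : Z => g • z) '' F)ᶜ) = 0)
    (hFfin : ∀ z ∈ F, {g : G | g • z ∈ F}.Finite) :
    (∃! νG : @Measure (Quotient (MulAction.orbitRel G Z))
        (MeasurableSpace.map (Quotient.mk (MulAction.orbitRel G Z)) mZ),
      IsQuotientMeasure ν νG) ∧
    (∀ νG : @Measure (Quotient (MulAction.orbitRel G Z))
        (MeasurableSpace.map (Quotient.mk (MulAction.orbitRel G Z)) mZ),
      IsQuotientMeasure ν νG →
      ∀ φ : Z → Z, Measurable φ →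
        (∀ A : Set Z, MeasurableSet A → ν (φ ⁻¹' A) = ν A) →
        (∀ (g : G) (z : Z), φ (g • z) = g • φ z) →
        ∀ φG : Quotient (MulAction.orbitRel G Z) → Quotient (MulAction.orbitRel G Z),
          (∀ z : Z, φG (Quotient.mk (MulAction.orbitRel G Z) z)
            = Quotient.mk (MulAction.orbitRel G Z) (φ z)) →
          ∀ S : Set (Quotient (MulAction.orbitRel G Z)),
            MeasurableSet[MeasurableSpace.map (Quotient.mk (MulAction.orbitRel G Z)) mZ] S →
            νG (φG ⁻¹' S) = νG S) := by
  have hGF0 : ν (GFset G F)ᶜ = 0 := by rw [← GFset_eq_iUnion]; exact hFfull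
  constructor
  · refine ⟨_, isQuot_map hmeas ν hinv F hFm hFfull hFfin, ?_⟩
    intro νG' hνG'
    refine Measure.ext fun S hS => ?_
    rw [quot_formula hmeas ν hinv F hFm hFfull hFfin νG' hνG' S hS,
      ← quot_formula hmeas ν hinv F hFm hFfull hFfin _
        (isQuot_map hmeas ν hinv F hFm hFfull hFfin) S hS]
  · intro νG hQ φ hφm hφinv hφcomm φG hφG S hS
    set B := Quotient.mk (MulAction.orbitRel G Z) ⁻¹' S with hBdef
    have hB : MeasurableSet B := hS
    have hpreφG : Quotient.mk (MulAction.orbitRel G Z) ⁻¹' (φG ⁻¹' S) = φ ⁻¹' B := by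
      ext z
      show φG (Quotient.mk (MulAction.orbitRel G Z) z) ∈ S ↔ φ z ∈ B
      rw [hφG]
      exact Iff.rfl
    have hS2 : MeasurableSet[MeasurableSpace.map (Quotient.mk (MulAction.orbitRel G Z)) mZ]
        (φG ⁻¹' S) := by
      show MeasurableSet (Quotient.mk (MulAction.orbitRel G Z) ⁻¹' (φG ⁻¹' S))
      rw [hpreφG]
      exact hφm hB
    set h2 : Z → ℝ≥0∞ := fun z => (φ ⁻¹' B).indicator (fun z => (fcnt G F (φ z))⁻¹) z with hh2
    have hmh2 : Measurable h2 :=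
      (((measurable_fcnt hmeas hFm).comp hφm).inv).indicator (hφm hB)
    have hBmem : ∀ (g : G) (z : Z), (g • z ∈ φ ⁻¹' B ↔ z ∈ φ ⁻¹' B) := by
      intro g z
      show φ (g • z) ∈ B ↔ φ z ∈ B
      rw [hφcomm]
      show Quotient.mk (MulAction.orbitRel G Z) (g • φ z) ∈ S ↔ _
      rw [pr_smul]
      exact Iff.rfl
    have hinv2 : ∀ (g : G) (z : Z), h2 (g • z) = h2 z := by
      intro g z
      by_cases hz : z ∈ φ ⁻¹' B
      · rw [hh2]
        simp only []
        rw [Set.indicator_of_mem ((hBmem g z).2 hz), Set.indicator_of_mem hz, hφcomm,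
          fcnt_smul]
      · rw [hh2]
        simp only []
        rw [Set.indicator_of_notMem (fun hc => hz ((hBmem g z).1 hc)),
          Set.indicator_of_notMem hz]
    have hA2 : MeasurableSet (φ ⁻¹' F) := hφm hFm
    have key2 := hQ (φ ⁻¹' F) hA2 h2 hmh2 hinv2
      (Quotient.lift h2 (lift_sound_of_invariant h2 hinv2))
      (Quotient.lift (fcnt G (φ ⁻¹' F)) (fcnt_lift_sound _)) (fun _ => rfl) (fun _ => rfl)
    have hfcomp : ∀ z : Z, fcnt G (φ ⁻¹' F) z = fcnt G F (φ z) := by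
      intro z
      rw [fcnt, fcnt]
      refine tsum_congr fun g => ?_
      have hm : (g • z ∈ φ ⁻¹' F) ↔ g • φ z ∈ F := by rw [Set.mem_preimage, hφcomm]
      by_cases hgz : g • z ∈ φ ⁻¹' F
      · rw [Set.indicator_of_mem hgz, Set.indicator_of_mem (hm.1 hgz)]
      · rw [Set.indicator_of_notMem hgz, Set.indicator_of_notMem (fun hc => hgz (hm.2 hc))]
    -- the bad set for this step
    set N := φ ⁻¹' (GFset G F)ᶜ with hNdef
    have hNm : MeasurableSet N := hφm (measurable_GFset hmeas hFm).compl
    have hNinv : ∀ (g : G) (z : Z), z ∈ N → g • z ∈ N := by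
      intro g z hz
      show φ (g • z) ∈ (GFset G F)ᶜ
      rw [hφcomm]
      exact GFset_compl_smul g hz
    set Tbad2 := Quotient.mk (MulAction.orbitRel G Z) '' N with hT2def
    have hpre2 : Quotient.mk (MulAction.orbitRel G Z) ⁻¹' Tbad2 = N :=
      preimage_image_pr N hNinv
    have hN0 : ν N = 0 := by
      rw [hNdef, hφinv _ (measurable_GFset hmeas hFm).compl]
      exact hGF0
    have hTbad2 : νG Tbad2 = 0 := by
      refine quot_null ν νG hQ Tbad2 ?_ ?_
      · rw [hpre2]; exact hNm
      · rw [hpre2]; exact hN0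
    have hae2 : ∀ᵐ q ∂νG, q ∉ Tbad2 := by
      rw [MeasureTheory.ae_iff]
      simpa using hTbad2
    have hRHS : ∫⁻ q, Quotient.lift h2 (lift_sound_of_invariant h2 hinv2) q *
        Quotient.lift (fcnt G (φ ⁻¹' F)) (fcnt_lift_sound _) q ∂νG = νG (φG ⁻¹' S) := by
      rw [← lintegral_indicator_one hS2]
      refine lintegral_congr_ae ?_
      filter_upwards [hae2] with q hq
      obtain ⟨z, rfl⟩ := Quotient.exists_rep q
      have hzGF : φ z ∈ GFset G F := by
        by_contra hc
        exact hq ⟨z, hc, rfl⟩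
      show h2 z * fcnt G (φ ⁻¹' F) z
          = (φG ⁻¹' S).indicator 1 (Quotient.mk (MulAction.orbitRel G Z) z)
      rw [hfcomp z]
      have hmemq : (Quotient.mk (MulAction.orbitRel G Z) z ∈ φG ⁻¹' S) ↔ z ∈ φ ⁻¹' B := by
        show φG (Quotient.mk (MulAction.orbitRel G Z) z) ∈ S ↔ φ z ∈ B
        rw [hφG]
        exact Iff.rfl
      by_cases hz : z ∈ φ ⁻¹' B
      · rw [hh2]
        simp only []
        rw [Set.indicator_of_mem hz,
          ENNReal.inv_mul_cancel (fcnt_ne_zero hzGF) (fcnt_ne_top hFfin hzGF),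
          Set.indicator_of_mem (hmemq.2 hz)]
        rfl
      · rw [hh2]
        simp only []
        rw [Set.indicator_of_notMem hz, zero_mul,
          Set.indicator_of_notMem (fun hc => hz (hmemq.1 hc))]
    have mpφ : MeasurePreserving φ ν ν :=
      ⟨hφm, Measure.ext fun A hA => by rw [Measure.map_apply hφm hA]; exact hφinv A hA⟩
    set K : Z → ℝ≥0∞ :=
      fun w => F.indicator (fun w => B.indicator (fun w => (fcnt G F w)⁻¹) w) w with hK
    have hmK : Measurable K := ((measurable_fcnt hmeas hFm).inv.indicator hB).indicator hFm
    have hLHS : ∫⁻ z in φ ⁻¹' F, h2 z ∂ν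
        = ∫⁻ z in F, B.indicator (fun z => (fcnt G F z)⁻¹) z ∂ν := by
      rw [← lintegral_indicator hA2, ← lintegral_indicator hFm]
      have hcomp := mpφ.lintegral_comp hmK
      calc ∫⁻ z, (φ ⁻¹' F).indicator h2 z ∂ν = ∫⁻ z, K (φ z) ∂ν := by
            refine lintegral_congr fun z => ?_
            by_cases hz : φ z ∈ F
            · rw [Set.indicator_of_mem (show z ∈ φ ⁻¹' F from hz), hK]
              simp only []
              rw [Set.indicator_of_mem hz, hh2]
              simp only []
              by_cases hz2 : φ z ∈ B
              · rw [Set.indicator_of_mem (show z ∈ φ ⁻¹' B from hz2),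
                  Set.indicator_of_mem hz2]
              · rw [Set.indicator_of_notMem (show z ∉ φ ⁻¹' B from hz2),
                  Set.indicator_of_notMem hz2]
            · rw [Set.indicator_of_notMem (show z ∉ φ ⁻¹' F from hz), hK]
              simp only []
              rw [Set.indicator_of_notMem hz]
        _ = ∫⁻ w, K w ∂ν := hcomp
        _ = ∫⁻ w, F.indicator (fun w => B.indicator (fun w => (fcnt G F w)⁻¹) w) w ∂ν := rfl
    rw [← hRHS, ← key2, hLHS]
    exact (quot_formula hmeas ν hinv F hFm hFfull hFfin νG hQ S hS).symm
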